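/- Let (v_j)_{j=1,...,n} be an orthonormal basis of ℝ^n consisting of eigenvectors of XᵀX, with XᵀX v_j = α_j v_j, where α_j > 0 for 1 ≤ j ≤ k and α_j = 0 for j > k. Suppose β is an eigenvalue of B satisfying β ≠ α_j for every j = 1,...,n. Then the vector w := Σ_{j=1}^{k} γ_j v_j, where γ_j := (v_jᵀ d) / ((α_j − β)·‖d‖₂), is nonzero and satisfies B w = β w. -/

import Mathlib

open Matrix Finset

/-- If `(v j)` is an orthonormal basis of eigenvectors of `XᵀX` with
eigenvalues `α j` (positive for `j < k`, zero otherwise), and `β` is an eigenvalue of the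
modularity matrix `B` different from every `α j`, then
`w = ∑_{j<k} γ j • v j` with `γ j = (v jᵀ d)/((α j - β)·‖d‖₂)` is a nonzero eigenvector of
`B` with eigenvalue `β`. -/
theorem stmt0 {p n k : ℕ} (X : Matrix (Fin p) (Fin n) ℝ)
    (e : Fin n → ℝ) (he : e = fun _ => (1 : ℝ))
    (d : Fin n → ℝ) (hd : d = (Xᵀ * X).mulVec e)
    (twoM : ℝ) (htwoM : twoM = e ⬝ᵥ (Xᵀ * X).mulVec e) (hm : twoM ≠ 0)
    (B : Matrix (Fin n) (Fin n) ℝ)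
    (hB : B = Xᵀ * X - twoM⁻¹ • vecMulVec d d)
    (v : Fin n → Fin n → ℝ)
    (hortho : ∀ i j : Fin n, v i ⬝ᵥ v j = if i = j then 1 else 0)
    (α : Fin n → ℝ)
    (heig : ∀ j : Fin n, (Xᵀ * X).mulVec (v j) = α j • v j)
    (hk : k ≤ n)
    (hαpos : ∀ j : Fin n, (j : ℕ) < k → 0 < α j)
    (hαzero : ∀ j : Fin n, k ≤ (j : ℕ) → α j = 0)
    (β : ℝ) (hβeig : ∃ u : Fin n → ℝ, u ≠ 0 ∧ B.mulVec u = β • u)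
    (hβ : ∀ j : Fin n, β ≠ α j)
    (γ : Fin n → ℝ)
    (hγ : ∀ j : Fin n, γ j = (v j ⬝ᵥ d) / ((α j - β) * Real.sqrt (d ⬝ᵥ d)))
    (w : Fin n → ℝ)
    (hw : w = ∑ j ∈ univ.filter (fun j : Fin n => (j : ℕ) < k), γ j • v j) :
    w ≠ 0 ∧ B.mulVec w = β • w := by
  obtain ⟨u, hu0, huB⟩ := hβeig
  set A := Xᵀ * X with hA
  set s := Real.sqrt (d ⬝ᵥ d) with hsdef
  have hAsym : Aᵀ = A := by rw [hA, transpose_mul, transpose_transpose]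
  have hsymdot : ∀ x y : Fin n → ℝ, x ⬝ᵥ A.mulVec y = A.mulVec x ⬝ᵥ y := by
    intro x y
    rw [dotProduct_mulVec, ← mulVec_transpose, hAsym]
  have hvd0 : ∀ j : Fin n, k ≤ (j : ℕ) → v j ⬝ᵥ d = 0 := by
    intro j hj
    rw [hd, hsymdot, heig j, hαzero j hj, zero_smul, zero_dotProduct]
  have hne : ∀ j : Fin n, α j - β ≠ 0 := fun j => sub_ne_zero.mpr fun hh => hβ j hh.symm
  -- completeness of the orthonormal system
  have hVVT : (Matrix.of v) * (Matrix.of v)ᵀ = 1 := by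
    ext i j
    simpa [Matrix.mul_apply, Matrix.one_apply, dotProduct] using hortho i j
  have hVTV : (Matrix.of v)ᵀ * (Matrix.of v) = 1 := mul_eq_one_comm.mp hVVT
  have hcol : ∀ i j : Fin n, (∑ l, v l i * v l j) = if i = j then 1 else 0 := by
    intro i j
    have h := congrFun (congrFun hVTV i) j
    simpa [Matrix.mul_apply, Matrix.one_apply] using h
  have hcomp : ∀ (x : Fin n → ℝ) (i : Fin n), ∑ l, (v l ⬝ᵥ x) * v l i = x i := by
    intro x i
    calc ∑ l, (v l ⬝ᵥ x) * v l i = ∑ j, (∑ l, v l i * v l j) * x j := by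
          simp only [dotProduct, Finset.sum_mul]
          rw [Finset.sum_comm]
          exact Finset.sum_congr rfl fun j _ => Finset.sum_congr rfl fun l _ => by ring
      _ = x i := by simp [hcol]
  -- basic nonvanishing facts
  have hd0 : d ≠ 0 := by
    intro h
    apply hm
    rw [htwoM, ← hd, h, dotProduct_zero]
  have hdd : 0 < d ⬝ᵥ d := by
    have h0 : 0 ≤ d ⬝ᵥ d := by
      exact Finset.sum_nonneg fun i _ => mul_self_nonneg _
    exact lt_of_le_of_ne h0 (fun h => hd0 (dotProduct_self_eq_zero.mp h.symm))
  have hs : 0 < s := Real.sqrt_pos.mpr hdd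
  have hsne : s ≠ 0 := ne_of_gt hs
  -- mulVec through B
  have hvmv : ∀ x : Fin n → ℝ, (vecMulVec d d).mulVec x = (d ⬝ᵥ x) • d := by
    intro x
    ext i
    simp only [Matrix.mulVec, dotProduct, vecMulVec_apply, Pi.smul_apply, smul_eq_mul,
      Finset.sum_mul]
    exact Finset.sum_congr rfl fun j _ => by ring
  have hBx : ∀ x : Fin n → ℝ, B.mulVec x = A.mulVec x - (twoM⁻¹ * (d ⬝ᵥ x)) • d := by
    intro x
    rw [hB, sub_mulVec, smul_mulVec, hvmv, smul_smul]
  -- coefficients of u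
  have hcu : ∀ j : Fin n, (α j - β) * (v j ⬝ᵥ u) = twoM⁻¹ * (d ⬝ᵥ u) * (v j ⬝ᵥ d) := by
    intro j
    have h1 : v j ⬝ᵥ B.mulVec u = β * (v j ⬝ᵥ u) := by
      rw [huB, dotProduct_smul, smul_eq_mul]
    have h2 : v j ⬝ᵥ B.mulVec u = α j * (v j ⬝ᵥ u) - twoM⁻¹ * (d ⬝ᵥ u) * (v j ⬝ᵥ d) := by
      rw [hBx u, dotProduct_sub, hsymdot, heig j, smul_dotProduct, dotProduct_smul]
      simp only [smul_eq_mul]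
    linear_combination h1 - h2
  have hdu : d ⬝ᵥ u ≠ 0 := by
    intro h0
    apply hu0
    funext i
    have hcz : ∀ j : Fin n, v j ⬝ᵥ u = 0 := by
      intro j
      have h := hcu j
      rw [h0, mul_zero, zero_mul] at h
      exact (mul_eq_zero.mp h).resolve_left (hne j)
    have h := hcomp u i
    simp only [hcz, zero_mul, Finset.sum_const_zero] at h
    exact h.symm
  -- secular equation
  have hdot : ∀ x y : Fin n → ℝ, x ⬝ᵥ y = ∑ i, x i * y i := fun x y => rfl
  have hdu_expand : d ⬝ᵥ u = ∑ l, (v l ⬝ᵥ d) * (v l ⬝ᵥ u) := by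
    calc d ⬝ᵥ u = ∑ i, (∑ l, (v l ⬝ᵥ d) * v l i) * u i := by
          rw [hdot d u]
          exact Finset.sum_congr rfl fun i _ => by rw [hcomp d i]
      _ = ∑ l, (v l ⬝ᵥ d) * (v l ⬝ᵥ u) := by
          simp only [Finset.sum_mul]
          rw [Finset.sum_comm]
          refine Finset.sum_congr rfl fun l _ => ?_
          rw [hdot (v l) u, Finset.mul_sum]
          exact Finset.sum_congr rfl fun i _ => by ring
  have hcval : ∀ l : Fin n, v l ⬝ᵥ u = twoM⁻¹ * (d ⬝ᵥ u) * (v l ⬝ᵥ d) / (α l - β) := by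
    intro l
    rw [eq_div_iff (hne l), mul_comm (v l ⬝ᵥ u) (α l - β), hcu l]
  have hsum : ∑ l, (v l ⬝ᵥ d) ^ 2 / (α l - β) = twoM := by
    have h1 : ∑ l, (v l ⬝ᵥ d) * (v l ⬝ᵥ u)
        = twoM⁻¹ * (d ⬝ᵥ u) * ∑ l, (v l ⬝ᵥ d) ^ 2 / (α l - β) := by
      rw [Finset.mul_sum]
      exact Finset.sum_congr rfl fun l _ => by rw [hcval l]; ring
    have h4 := hdu_expand.trans h1
    have hinv : twoM * twoM⁻¹ = 1 := mul_inv_cancel₀ hm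
    have h2 : (d ⬝ᵥ u) * twoM = (d ⬝ᵥ u) * ∑ l, (v l ⬝ᵥ d) ^ 2 / (α l - β) := by
      linear_combination twoM * h4 + (∑ l, (v l ⬝ᵥ d) ^ 2 / (α l - β)) * (d ⬝ᵥ u) * hinv
    exact (mul_left_cancel₀ hdu h2).symm
  -- extend filtered sums to full sums
  have hext : ∀ f : Fin n → ℝ, (∀ j : Fin n, k ≤ (j : ℕ) → f j = 0) →
      ∑ j ∈ univ.filter (fun j : Fin n => (j : ℕ) < k), f j = ∑ j, f j := by
    intro f hf
    apply Finset.sum_filter_of_ne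
    intro x _ hx
    by_contra hc
    exact hx (hf x (le_of_not_gt hc))
  -- dot products of w
  have hwi : ∀ i : Fin n, w i = ∑ j ∈ univ.filter (fun j : Fin n => (j : ℕ) < k), γ j * v j i := by
    intro i
    rw [hw]
    simp [Finset.sum_apply]
  have hdw : d ⬝ᵥ w = twoM / s := by
    have h1 : d ⬝ᵥ w = ∑ j ∈ univ.filter (fun j : Fin n => (j : ℕ) < k),
        (v j ⬝ᵥ d) ^ 2 / ((α j - β) * s) := by
      have hterm : ∀ j : Fin n, ∑ i, d i * (γ j * v j i)
          = (v j ⬝ᵥ d) ^ 2 / ((α j - β) * s) := by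
        intro j
        have h5 : ∑ i, d i * (γ j * v j i) = γ j * (v j ⬝ᵥ d) := by
          rw [hdot (v j) d, Finset.mul_sum]
          exact Finset.sum_congr rfl fun i _ => by ring
        rw [h5, hγ j]
        ring
      calc d ⬝ᵥ w = ∑ i, d i * w i := hdot d w
        _ = ∑ i, ∑ j ∈ univ.filter (fun j : Fin n => (j : ℕ) < k), d i * (γ j * v j i) := by
            exact Finset.sum_congr rfl fun i _ => by rw [hwi i, Finset.mul_sum]
        _ = ∑ j ∈ univ.filter (fun j : Fin n => (j : ℕ) < k), ∑ i, d i * (γ j * v j i) :=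
            Finset.sum_comm
        _ = ∑ j ∈ univ.filter (fun j : Fin n => (j : ℕ) < k),
            (v j ⬝ᵥ d) ^ 2 / ((α j - β) * s) :=
            Finset.sum_congr rfl fun j _ => hterm j
    rw [h1, hext _ (fun j hj => by rw [hvd0 j hj]; ring), ← hsum, Finset.sum_div]
    exact Finset.sum_congr rfl fun j _ => by
      rw [div_div]
  -- w is nonzero
  have hwne : w ≠ 0 := by
    intro h
    apply hm
    have : d ⬝ᵥ w = 0 := by rw [h, dotProduct_zero]
    rw [hdw] at this
    exact (div_eq_zero_iff.mp this).resolve_right hsne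
  refine ⟨hwne, ?_⟩
  -- the eigenvector equation
  have hAw : ∀ i : Fin n, A.mulVec w i =
      ∑ j ∈ univ.filter (fun j : Fin n => (j : ℕ) < k), γ j * (α j * v j i) := by
    intro i
    have : A.mulVec w i = ∑ l, (A i l) * w l := by
      simp [Matrix.mulVec, dotProduct]
    rw [this]
    simp only [hwi, Finset.mul_sum]
    rw [Finset.sum_comm]
    refine Finset.sum_congr rfl fun j _ => ?_
    have hAv : ∑ l, A i l * v j l = α j * v j i := by
      have := congrFun (heig j) i
      simpa [Matrix.mulVec, dotProduct, Pi.smul_apply, smul_eq_mul] using this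
    calc ∑ l, A i l * (γ j * v j l) = γ j * ∑ l, A i l * v j l := by
          rw [Finset.mul_sum]
          exact Finset.sum_congr rfl fun l _ => by ring
      _ = γ j * (α j * v j i) := by rw [hAv]
  have hdi : ∀ i : Fin n, d i = ∑ j ∈ univ.filter (fun j : Fin n => (j : ℕ) < k),
      (v j ⬝ᵥ d) * v j i := by
    intro i
    rw [hext _ (fun j hj => by rw [hvd0 j hj, zero_mul]), hcomp d i]
  funext i
  rw [hBx w, hdw]
  simp only [Pi.sub_apply, Pi.smul_apply, smul_eq_mul]
  rw [hAw i, hwi i, hdi i, Finset.mul_sum, Finset.mul_sum, ← Finset.sum_sub_distrib]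
  refine Finset.sum_congr rfl fun j hj => ?_
  rw [hγ j]
  have h6 : (α j - β) * s ≠ 0 := mul_ne_zero (hne j) hsne
  field_simp [h6, hne j]
  ring
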